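/- The set of isolated subgroups of Γ having an immediate successor in isolated(Γ) is exactly the set of dual T-isolated subgroups: IP(isolated(Γ)) = {dH_t | t ∈ T}. -/

import Mathlib

/-- The carrier of Γ: functions `T → G` with well-ordered support. -/
def Gamma (T G : Type*) [LinearOrder T] [Zero G] [LT G] : Set (T → G) :=
  {f | (Function.support f).IsWF}

/-- The (left-to-right lexicographic) order on functions `T → G`:
`f ≤ g` iff `f = g` or `f` and `g` agree before some point `t` at which `f t < g t`. -/
def lexLE {T G : Type*} [LinearOrder T] [LT G] (f g : T → G) : Prop :=
  f = g ∨ ∃ t, (∀ s, s < t → f s = g s) ∧ f t < g t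

/-- `H` is an isolated subgroup of Γ: a subgroup of Γ that is convex for the
lexicographic order. -/
def IsIsolated (T G : Type*) [LinearOrder T] [AddCommGroup G] [LinearOrder G]
    [IsOrderedAddMonoid G]
    (H : Set (T → G)) : Prop :=
  H ⊆ Gamma T G ∧ (0 : T → G) ∈ H ∧ (∀ f ∈ H, ∀ g ∈ H, f + g ∈ H) ∧
  (∀ f ∈ H, -f ∈ H) ∧
  ∀ h ∈ H, ∀ g ∈ Gamma T G, lexLE 0 g → lexLE g h → g ∈ H

/-- The T-isolated subgroup `H_t`: elements of Γ vanishing strictly before `t`. -/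
def Ht (T G : Type*) [LinearOrder T] [Zero G] [LT G] (t : T) : Set (T → G) :=
  {f ∈ Gamma T G | ∀ s, s < t → f s = 0}

/-- The dual T-isolated subgroup `dH_t`: elements of Γ vanishing at and before `t`. -/
def dHt (T G : Type*) [LinearOrder T] [Zero G] [LT G] (t : T) : Set (T → G) :=
  {f ∈ Gamma T G | ∀ s, s ≤ t → f s = 0}

/-- `X` and `Y` are immediate neighbors in `B` (ordered by inclusion). -/
def ImmNbr {α : Type*} (B : Set (Set α)) (X Y : Set α) : Prop :=
  X ∈ B ∧ Y ∈ B ∧ X ⊂ Y ∧ ¬∃ Z ∈ B, X ⊂ Z ∧ Z ⊂ Y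

/-- `ISet B` is the set of members of `B` having an immediate predecessor in `B`. -/
def ISet {α : Type*} (B : Set (Set α)) : Set (Set α) := {Y | ∃ X, ImmNbr B X Y}

/-- `IPSet B` is the set of members of `B` having an immediate successor in `B`. -/
def IPSet {α : Type*} (B : Set (Set α)) : Set (Set α) := {X | ∃ Y, ImmNbr B X Y}

section Aux

variable {T G : Type*} [LinearOrder T] [AddCommGroup G] [LinearOrder G] [IsOrderedAddMonoid G]

/-- functions in Γ vanishing outside `U`. -/
def HU (T G : Type*) [LinearOrder T] [Zero G] [LT G] (U : Set T) : Set (T → G) :=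
  {f ∈ Gamma T G | ∀ s, s ∉ U → f s = 0}

lemma zero_mem_Gamma : (0 : T → G) ∈ Gamma T G := by
  show (Function.support (0 : T → G)).IsWF
  exact Set.isWF_empty.mono (fun s hs => hs rfl)

lemma neg_mem_Gamma {f : T → G} (hf : f ∈ Gamma T G) : -f ∈ Gamma T G := by
  show (Function.support (-f)).IsWF
  exact Set.IsWF.mono hf (fun s hs => fun h => hs (by simp [h]))

lemma add_mem_Gamma {f g : T → G} (hf : f ∈ Gamma T G) (hg : g ∈ Gamma T G) :
    f + g ∈ Gamma T G :=
  Set.IsWF.mono (Set.IsWF.union hf hg) (Function.support_add f g)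

/-- positive-leading replacement of a nonzero element of `H`. -/
lemma exists_posLead {H : Set (T → G)} (hH : IsIsolated T G H) {h : T → G}
    (hh : h ∈ H) {s : T} (hs : h s ≠ 0) :
    ∃ h' ∈ H, ∃ s0, s0 ≤ s ∧ (∀ r, r < s0 → h' r = 0) ∧ 0 < h' s0 := by
  have hΓ : (Function.support h).IsWF := hH.1 hh
  have hne : (Function.support h).Nonempty := ⟨s, hs⟩
  set s0 := hΓ.min hne with hs0
  have hmem : h s0 ≠ 0 := hΓ.min_mem hne
  have hle : s0 ≤ s := hΓ.min_le hne hs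
  have hvan : ∀ r, r < s0 → h r = 0 := by
    intro r hr
    by_contra hc
    exact hΓ.not_lt_min hne hc hr
  rcases hmem.lt_or_gt with hneg | hpos
  · refine ⟨-h, hH.2.2.2.1 h hh, s0, hle, ?_, ?_⟩
    · intro r hr; simp [hvan r hr]
    · simpa using hneg
  · exact ⟨h, hh, s0, hle, hvan, hpos⟩

lemma nsmul_succ_mem {H : Set (T → G)} (hH : IsIsolated T G H) {f : T → G} (hf : f ∈ H) :
    ∀ n : ℕ, (n + 1) • f ∈ H
  | 0 => by simpa using hf
  | n + 1 => by
      rw [succ_nsmul]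
      exact hH.2.2.1 _ (nsmul_succ_mem hH hf n) _ hf

lemma mem_of_posLead [Archimedean G] {H : Set (T → G)} (hH : IsIsolated T G H) {g : T → G}
    (hg : g ∈ Gamma T G) {s : T} (hvan : ∀ r, r < s → g r = 0) (hpos : 0 < g s)
    {h : T → G} (hh : h ∈ H) (hhs : h s ≠ 0) : g ∈ H := by
  obtain ⟨h', hh', s0, hs0le, hvan', hpos'⟩ := exists_posLead hH hh hhs
  have hg0 : lexLE (0 : T → G) g :=
    Or.inr ⟨s, fun r hr => by simp [hvan r hr], by simpa using hpos⟩
  rcases lt_or_eq_of_le hs0le with hlt | heq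
  · refine hH.2.2.2.2 h' hh' g hg hg0 (Or.inr ⟨s0, ?_, ?_⟩)
    · intro r hr; rw [hvan r (hr.trans hlt), hvan' r hr]
    · rw [hvan s0 hlt]; exact hpos'
  · subst heq
    obtain ⟨n, hn⟩ := Archimedean.arch (g s0) hpos'
    have hlt2 : g s0 < (n + 1) • (h' s0) := by
      rw [succ_nsmul]
      exact lt_of_le_of_lt hn (lt_add_of_pos_right _ hpos')
    refine hH.2.2.2.2 ((n + 1) • h') (nsmul_succ_mem hH hh' n) g hg hg0
      (Or.inr ⟨s0, ?_, ?_⟩)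
    · intro r hr
      have : h' r = 0 := hvan' r hr
      simp [hvan r hr, Pi.smul_apply, this]
    · simpa [Pi.smul_apply] using hlt2

lemma mem_of_forall_exists [Archimedean G] {H : Set (T → G)}
    (hH : IsIsolated T G H) {g : T → G}
    (hg : g ∈ Gamma T G) (hsup : ∀ s, g s ≠ 0 → ∃ h ∈ H, h s ≠ 0) : g ∈ H := by
  by_cases h0 : g = 0
  · subst h0; exact hH.2.1
  · have hne : (Function.support g).Nonempty := Function.support_nonempty_iff.mpr h0
    have hsmem : g (hg.min hne) ≠ 0 := hg.min_mem hne
    set s := hg.min hne with hsdef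
    have hvan : ∀ r, r < s → g r = 0 := by
      intro r hr
      by_contra hc
      exact hg.not_lt_min hne hc hr
    obtain ⟨h, hh, hhs⟩ := hsup s hsmem
    rcases hsmem.lt_or_gt with hneg | hpos
    · have hmem : -g ∈ H := mem_of_posLead hH (neg_mem_Gamma hg)
        (fun r hr => by simp [hvan r hr]) (by simpa using hneg) hh hhs
      have := hH.2.2.2.1 _ hmem
      simpa using this
    · exact mem_of_posLead hH hg hvan hpos hh hhs

/-- the set of coordinates realized by `H`. -/
def UH (H : Set (T → G)) : Set T := {t | ∃ h ∈ H, h t ≠ 0}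

lemma eq_HU [Archimedean G] {H : Set (T → G)} (hH : IsIsolated T G H) :
    H = HU T G (UH H) := by
  ext f
  constructor
  · intro hf
    refine ⟨hH.1 hf, fun s hs => ?_⟩
    by_contra hc
    exact hs ⟨f, hf, hc⟩
  · rintro ⟨hfΓ, hval⟩
    refine mem_of_forall_exists hH hfΓ (fun s hs => ?_)
    by_contra hc
    exact hs (hval s hc)

/-- indicator function -/
def ind (t : T) (a : G) : T → G := fun s => if s = t then a else 0

lemma ind_apply_self (t : T) (a : G) : ind t a t = a := if_pos rfl

lemma ind_apply_ne {t s : T} (a : G) (h : s ≠ t) : ind t a s = 0 := if_neg h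

lemma ind_mem_Gamma (t : T) (a : G) : ind t a ∈ Gamma T G := by
  have hsub : Function.support (ind t a) ⊆ {t} := by
    intro s hs
    by_contra hc
    exact hs (ind_apply_ne a hc)
  exact Set.IsWF.mono (Set.finite_singleton t).isWF hsub

lemma exists_pos (G : Type*) [AddCommGroup G] [LinearOrder G] [IsOrderedAddMonoid G] [Nontrivial G] :
    ∃ a : G, 0 < a := by
  obtain ⟨x, hx⟩ := exists_ne (0 : G)
  exact ⟨|x|, abs_pos.mpr hx⟩

lemma UH_upper [Nontrivial G] {H : Set (T → G)} (hH : IsIsolated T G H) :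
    ∀ t ∈ UH H, ∀ t', t ≤ t' → t' ∈ UH H := by
  rintro t ⟨h, hh, hht⟩ t' htt'
  rcases eq_or_lt_of_le htt' with rfl | hlt
  · exact ⟨h, hh, hht⟩
  obtain ⟨a, ha⟩ := exists_pos G
  obtain ⟨h', hh', s0, hs0le, hvan', hpos'⟩ := exists_posLead hH hh hht
  have hs0t' : s0 < t' := lt_of_le_of_lt hs0le hlt
  have hmem : ind t' a ∈ H := by
    refine hH.2.2.2.2 h' hh' _ (ind_mem_Gamma t' a)
      (Or.inr ⟨t', ?_, ?_⟩) (Or.inr ⟨s0, ?_, ?_⟩)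
    · intro r hr
      simp [ind_apply_ne a hr.ne]
    · simpa [ind_apply_self] using ha
    · intro r hr
      rw [ind_apply_ne a (hr.trans hs0t').ne, hvan' r hr]
    · rw [ind_apply_ne a hs0t'.ne]
      exact hpos'
  refine ⟨ind t' a, hmem, ?_⟩
  rw [ind_apply_self]
  exact ha.ne'

lemma HU_isolated (U : Set T) (hU : ∀ a ∈ U, ∀ b, a ≤ b → b ∈ U) :
    IsIsolated T G (HU T G U) := by
  refine ⟨fun f hf => hf.1, ⟨zero_mem_Gamma, fun _ _ => rfl⟩, ?_, ?_, ?_⟩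
  · intro f hf g hg
    exact ⟨add_mem_Gamma hf.1 hg.1, fun s hs => by
      show f s + g s = 0
      rw [hf.2 s hs, hg.2 s hs, add_zero]⟩
  · intro f hf
    exact ⟨neg_mem_Gamma hf.1, fun s hs => by
      show -(f s) = 0
      rw [hf.2 s hs, neg_zero]⟩
  · intro h hhm g hgΓ hg0 hgh
    refine ⟨hgΓ, fun r hr => ?_⟩
    by_contra hgr
    rcases hg0 with h0 | ⟨u, huv, hupos⟩
    · exact hgr (by rw [← h0]; rfl)
    have hgu : ∀ r', r' < u → g r' = 0 := fun r' hr' => (huv r' hr').symm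
    have hur : u ≤ r := le_of_not_gt fun hc => hgr (hgu r hc)
    have hvanh : ∀ v', v' ≤ r → h v' = 0 := fun v' hv' =>
      hhm.2 v' (fun hvU => hr (hU v' hvU r hv'))
    have hupos' : (0 : G) < g u := hupos
    rcases hgh with heq | ⟨v, hvv, hvlt⟩
    · exact hgr (by rw [heq]; exact hvanh r le_rfl)
    rcases lt_trichotomy v u with h1 | h1 | h1
    · have hzero : h v = 0 := hvanh v (h1.le.trans hur)
      rw [hgu v h1, hzero] at hvlt
      exact lt_irrefl 0 hvlt
    · subst h1
      have hzero : h v = 0 := hvanh v hur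
      rw [hzero] at hvlt
      exact lt_irrefl 0 (hupos'.trans hvlt)
    · have hgv : g u = h u := hvv u h1
      have hzero : h u = 0 := hvanh u hur
      rw [hzero] at hgv
      rw [hgv] at hupos'
      exact lt_irrefl 0 hupos'

lemma dHt_eq_HU (t : T) : dHt T G t = HU T G {s | t < s} := by
  ext f
  constructor
  · rintro ⟨h1, h2⟩
    exact ⟨h1, fun s hs => h2 s (not_lt.mp hs)⟩
  · rintro ⟨h1, h2⟩
    exact ⟨h1, fun s hs => h2 s (not_lt.mpr hs)⟩

lemma Ht_eq_HU (t : T) : Ht T G t = HU T G {s | t ≤ s} := by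
  ext f
  constructor
  · rintro ⟨h1, h2⟩
    exact ⟨h1, fun s hs => h2 s (not_le.mp hs)⟩
  · rintro ⟨h1, h2⟩
    exact ⟨h1, fun s hs => h2 s (not_le.mpr hs)⟩

lemma ind_mem_HU {U : Set T} {t : T} (ht : t ∈ U) (a : G) : ind t a ∈ HU T G U := by
  refine ⟨ind_mem_Gamma t a, fun s hs => ?_⟩
  exact ind_apply_ne a (fun h => hs (h ▸ ht))

lemma ind_not_mem_HU {U : Set T} {t : T} (ht : t ∉ U) {a : G} (ha : a ≠ 0) :
    ind t a ∉ HU T G U := by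
  intro hmem
  exact ha (by simpa [ind_apply_self] using hmem.2 t ht)

end Aux

theorem stmt11 {T G : Type*} [LinearOrder T] [Nonempty T]
    [AddCommGroup G] [LinearOrder G] [IsOrderedAddMonoid G] [Archimedean G] [Nontrivial G] :
    IPSet {H : Set (T → G) | IsIsolated T G H} = {S | ∃ t : T, S = dHt T G t} := by
  obtain ⟨a, ha⟩ := exists_pos G
  ext S
  constructor
  · rintro ⟨Y, hS, hY, hsub, hnomid⟩
    have hSY : S ⊆ Y := hsub.1
    have hUS : S = HU T G (UH S) := eq_HU hS
    have hUY : Y = HU T G (UH Y) := eq_HU hY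
    have hUsub : UH S ⊆ UH Y := by rintro x ⟨h, hh, hx⟩; exact ⟨h, hSY hh, hx⟩
    -- find t ∈ UH Y \ UH S
    obtain ⟨f, hfY, hfS⟩ := Set.exists_of_ssubset hsub
    rw [hUS] at hfS
    have hfΓ : f ∈ Gamma T G := hY.1 hfY
    have : ¬ ∀ s, s ∉ UH S → f s = 0 := fun hc => hfS ⟨hfΓ, hc⟩
    push_neg at this
    obtain ⟨t, htS, hft⟩ := this
    have htY : t ∈ UH Y := ⟨f, hfY, hft⟩
    -- claim: everything not in UH S is ≤ t
    have hmax : ∀ t', t' ∉ UH S → t' ≤ t := by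
      intro t' ht'
      by_contra hc
      push_neg at hc  -- t < t'
      -- intermediate Z
      set V : Set T := UH S ∪ {s | t' ≤ s} with hV
      have hVupper : ∀ x ∈ V, ∀ y, x ≤ y → y ∈ V := by
        rintro x (hx | hx) y hxy
        · exact Or.inl (UH_upper hS x hx y hxy)
        · exact Or.inr (le_trans hx hxy)
      have hZiso : IsIsolated T G (HU T G V) := HU_isolated V hVupper
      have hSZ : S ⊆ HU T G V := by
        intro g hg
        rw [hUS] at hg
        exact ⟨hg.1, fun s hs => hg.2 s (fun hsS => hs (Or.inl hsS))⟩
      have heZ : ind t' a ∈ HU T G V := ind_mem_HU (U := V) (Or.inr (le_refl t')) a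
      have heS : ind t' a ∉ S := by
        rw [hUS]; exact ind_not_mem_HU ht' ha.ne'
      have hZY : HU T G V ⊆ Y := by
        intro g hg
        rw [hUY]
        refine ⟨hg.1, fun s hs => hg.2 s ?_⟩
        rintro (hsS | hst')
        · exact hs (hUsub hsS)
        · exact hs (UH_upper hY t htY s (le_of_lt (lt_of_lt_of_le hc hst')))
      have heY : ind t a ∈ Y := by
        rw [hUY]; exact ind_mem_HU htY a
      have heZ' : ind t a ∉ HU T G V := by
        refine ind_not_mem_HU ?_ ha.ne'
        rintro (hx | hx)
        · exact htS hx
        · exact absurd hc (not_lt.mpr hx)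
      exact hnomid ⟨HU T G V, hZiso, ⟨hSZ, fun h => heS (h heZ)⟩,
        ⟨hZY, fun h => heZ' (h heY)⟩⟩
    -- conclude UH S = {s | t < s}
    have hUeq : UH S = {s | t < s} := by
      ext s
      constructor
      · intro hsU
        by_contra hns
        exact htS (UH_upper hS s hsU t (not_lt.mp hns))
      · intro hst
        by_contra hns
        exact absurd (hmax s hns) (not_le.mpr hst)
    exact ⟨t, by rw [hUS, hUeq, ← dHt_eq_HU]⟩
  · rintro ⟨t, rfl⟩
    refine ⟨Ht T G t, ?_, ?_, ?_, ?_⟩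
    · show IsIsolated T G (dHt T G t)
      rw [dHt_eq_HU]
      exact HU_isolated _ (fun x hx y hxy => lt_of_lt_of_le hx hxy)
    · show IsIsolated T G (Ht T G t)
      rw [Ht_eq_HU]
      exact HU_isolated _ (fun x hx y hxy => le_trans hx hxy)
    · constructor
      · rintro f ⟨h1, h2⟩
        exact ⟨h1, fun s hs => h2 s hs.le⟩
      · intro hcon
        have hmem : ind t a ∈ Ht T G t := by
          rw [Ht_eq_HU]; exact ind_mem_HU le_rfl a
        have : ind t a ∉ dHt T G t := by
          rw [dHt_eq_HU]
          exact ind_not_mem_HU (by simp) ha.ne'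
        exact this (hcon hmem)
    · rintro ⟨Z, hZiso, hdZ, hZH⟩
      have hZU : Z = HU T G (UH Z) := eq_HU hZiso
      -- find f ∈ Z \ dHt
      obtain ⟨f, hfZ, hfd⟩ := Set.exists_of_ssubset hdZ
      have hfHt : f ∈ Ht T G t := hZH.1 hfZ
      have hft : f t ≠ 0 := by
        intro hc
        refine hfd ⟨hfHt.1, fun s hs => ?_⟩
        rcases lt_or_eq_of_le hs with h1 | h1
        · exact hfHt.2 s h1
        · rw [h1]; exact hc
      have htZ : t ∈ UH Z := ⟨f, hfZ, hft⟩
      -- then Ht ⊆ Z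
      have : Ht T G t ⊆ Z := by
        intro g hg
        rw [hZU]
        refine ⟨hg.1, fun s hs => ?_⟩
        by_contra hc
        have hts : t ≤ s := le_of_not_gt (fun h => hc (hg.2 s h))
        exact hs (UH_upper hZiso t htZ s hts)
      exact hZH.2 this
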